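/- For all nonnegative reals x₁, x₂, x₃, if (x₁+x₂+x₃)⁴ - 12(x₁²x₂² + x₁²x₃² + x₂²x₃²) - 12x₁x₂x₃(x₁ + x₂ + x₃) = 0, then x₁ = x₂ = x₃ = 0. -/
import Mathlib


theorem stmt_8 (x₁ x₂ x₃ : ℝ) (h₁ : 0 ≤ x₁) (h₂ : 0 ≤ x₂) (h₃ : 0 ≤ x₃)
    (h : (x₁+x₂+x₃)^4 - 12*(x₁^2*x₂^2 + x₁^2*x₃^2 + x₂^2*x₃^2)
        - 12*x₁*x₂*x₃*(x₁ + x₂ + x₃) = 0) :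
    x₁ = 0 ∧ x₂ = 0 ∧ x₃ = 0 := by
  have key : x₁^4 + x₂^4 + x₃^4 ≤ 0 := by
    nlinarith [sq_nonneg (x₁^2 - x₂^2), sq_nonneg (x₁^2 - x₃^2), sq_nonneg (x₂^2 - x₃^2),
      mul_nonneg (mul_nonneg h₁ h₂) (sq_nonneg (x₁ - x₂)),
      mul_nonneg (mul_nonneg h₁ h₃) (sq_nonneg (x₁ - x₃)),
      mul_nonneg (mul_nonneg h₂ h₃) (sq_nonneg (x₂ - x₃))]
  have e : ∀ y : ℝ, 0 ≤ y → y^4 ≤ 0 → y = 0 := fun y hy hy4 =>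
    pow_eq_zero_iff (n := 4) (by norm_num) |>.mp (le_antisymm hy4 (pow_nonneg hy 4))
  exact ⟨e x₁ h₁ (by nlinarith [pow_nonneg h₂ 4, pow_nonneg h₃ 4]),
         e x₂ h₂ (by nlinarith [pow_nonneg h₁ 4, pow_nonneg h₃ 4]),
         e x₃ h₃ (by nlinarith [pow_nonneg h₁ 4, pow_nonneg h₂ 4])⟩
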